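/- Let n ≥ 3 be odd and let D_{2n} = ⟨a, b | a^n = b^2 = 1, bab = a^{−1}⟩ be the dihedral group of order 2n. Its maximal abelian subgroups are the rotation subgroup ⟨a⟩ (cyclic of order n) and the n reflection subgroups ⟨a^i b⟩ (each cyclic of order 2, for 0 ≤ i < n), and D_{2n} has trivial center. Let P be the free product of these n+1 subgroups (the coproduct in the category of groups) and let π : P → D_{2n} be the canonical homomorphism induced by the inclusions of these subgroups into D_{2n}. Then the kernel of π is a free group of rank n² − 1. -/

import Mathlib

/-- The family of subgroups of the dihedral group `D_{2n}` consisting of the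
rotation subgroup `⟨a⟩` (indexed by `none`) and the `n` reflection subgroups
`⟨aⁱb⟩` (indexed by `some i`). -/
def dihedralMaxAbelianFamily (n : ℕ) : Option (ZMod n) → Subgroup (DihedralGroup n)
  | none => Subgroup.zpowers (DihedralGroup.r 1)
  | some i => Subgroup.zpowers (DihedralGroup.sr i)

open DihedralGroup

namespace DKF
section Classification
variable {n : ℕ}

lemma two_ne_zero' (hn : 3 ≤ n) : (2 : ZMod n) ≠ 0 := by
  intro h
  have h2 : ((2 : ℕ) : ZMod n) = 0 := by exact_mod_cast h
  rw [ZMod.natCast_eq_zero_iff] at h2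
  have := Nat.le_of_dvd (by norm_num) h2
  omega

lemma eq_zero_of_two_mul (hodd : Odd n) {j : ZMod n} (h : 2 * j = 0) : j = 0 := by
  have hu : IsUnit (2 : ZMod n) := by
    have : IsUnit ((2 : ℕ) : ZMod n) := by
      rw [ZMod.isUnit_iff_coprime]
      exact Nat.coprime_two_left.mpr hodd
    simpa using this
  exact (hu.mul_right_eq_zero).mp h

lemma r_one_zpow (k : ℤ) : (r 1 : DihedralGroup n) ^ k = r (k : ZMod n) := by
  cases k with
  | ofNat m => simpa using r_one_pow m
  | negSucc m =>
      rw [zpow_negSucc, r_one_pow]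
      show (r ((m+1 : ℕ) : ZMod n) : DihedralGroup n)⁻¹ = _
      show r (-((m+1 : ℕ) : ZMod n)) = _
      congr 1
      push_cast
      ring

lemma mem_zpowers_r_one [NeZero n] (x : DihedralGroup n) :
    x ∈ Subgroup.zpowers (r 1 : DihedralGroup n) ↔ ∃ j, x = r j := by
  constructor
  · rintro h
    obtain ⟨k, rfl⟩ := Subgroup.mem_zpowers_iff.mp h
    exact ⟨k, (r_one_zpow k)⟩
  · rintro ⟨j, rfl⟩
    rw [Subgroup.mem_zpowers_iff]
    exact ⟨(j.val : ℤ), by rw [r_one_zpow]; congr 1; simpa using ZMod.natCast_zmod_val j⟩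

lemma mem_zpowers_sr [NeZero n] (i : ZMod n) (x : DihedralGroup n) :
    x ∈ Subgroup.zpowers (sr i : DihedralGroup n) ↔ x = 1 ∨ x = sr i := by
  constructor
  · intro h
    obtain ⟨k, rfl⟩ := Subgroup.mem_zpowers_iff.mp h
    have h2 := zpow_mod_orderOf (sr i : DihedralGroup n) k
    rw [orderOf_sr i] at h2
    push_cast at h2
    rcases Int.emod_two_eq k with h0 | h1
    · left; rw [← h2, h0]; simp
    · right; rw [← h2, h1]; simp
  · rintro (rfl | rfl)
    · exact Subgroup.one_mem _
    · exact Subgroup.mem_zpowers _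

lemma zpowers_comm {G : Type*} [Group G] (g : G) {x y : G}
    (hx : x ∈ Subgroup.zpowers g) (hy : y ∈ Subgroup.zpowers g) : x * y = y * x := by
  obtain ⟨a, rfl⟩ := Subgroup.mem_zpowers_iff.mp hx
  obtain ⟨b, rfl⟩ := Subgroup.mem_zpowers_iff.mp hy
  rw [← zpow_add, ← zpow_add, add_comm]

-- commuting computations
lemma comm_r_sr (hodd : Odd n) {j i : ZMod n} (h : r j * sr i = sr i * r j) : j = 0 := by
  rw [r_mul_sr, sr_mul_r] at h
  simp only [sr.injEq] at h
  apply eq_zero_of_two_mul hodd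
  linear_combination -h

lemma comm_sr_sr (hodd : Odd n) {k i : ZMod n} (h : sr k * sr i = sr i * sr k) : k = i := by
  rw [sr_mul_sr, sr_mul_sr] at h
  simp only [r.injEq] at h
  have : 2 * (k - i) = 0 := by linear_combination -h
  have := eq_zero_of_two_mul hodd this
  linear_combination this

lemma center_trivial (hn : 3 ≤ n) (hodd : Odd n) :
    Subgroup.center (DihedralGroup n) = ⊥ := by
  rw [eq_bot_iff]
  intro x hx
  rw [Subgroup.mem_center_iff] at hx
  rw [Subgroup.mem_bot]
  cases x with
  | r j =>
      have h := (hx (sr 0)).symm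
      have := comm_r_sr hodd h
      rw [this, one_def]
  | sr i =>
      have h := hx (r 1)
      rw [r_mul_sr, sr_mul_r] at h
      simp only [sr.injEq] at h
      exfalso
      apply two_ne_zero' hn
      linear_combination -h

lemma classification (hn : 3 ≤ n) (hodd : Odd n) (M : Subgroup (DihedralGroup n)) :
    ((∀ x ∈ M, ∀ y ∈ M, x * y = y * x) ∧
      ∀ N : Subgroup (DihedralGroup n),
        (∀ x ∈ N, ∀ y ∈ N, x * y = y * x) → M ≤ N → M = N) ↔
    (M = Subgroup.zpowers (r 1) ∨ ∃ i : ZMod n, M = Subgroup.zpowers (sr i)) := by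
  haveI : NeZero n := ⟨by omega⟩
  constructor
  · rintro ⟨habel, hmax⟩
    by_cases hsr : ∃ i, sr i ∈ M
    · obtain ⟨i, hi⟩ := hsr
      right; refine ⟨i, ?_⟩
      apply hmax
      · intro x hx y hy; exact zpowers_comm _ hx hy
      · intro x hx
        rw [mem_zpowers_sr]
        cases x with
        | r j =>
            have := comm_r_sr hodd (habel _ hx _ hi)
            left; rw [this, one_def]
        | sr k =>
            right
            rw [comm_sr_sr hodd (habel _ hx _ hi)]
    · left
      apply hmax
      · intro x hx y hy; exact zpowers_comm _ hx hy
      · intro x hx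
        rw [mem_zpowers_r_one]
        cases x with
        | r j => exact ⟨j, rfl⟩
        | sr k => exact absurd ⟨k, hx⟩ hsr
  · rintro (rfl | ⟨i, rfl⟩)
    · refine ⟨fun x hx y hy => zpowers_comm _ hx hy, fun N hN hle => ?_⟩
      refine le_antisymm hle ?_
      intro x hx
      rw [mem_zpowers_r_one]
      cases x with
      | r j => exact ⟨j, rfl⟩
      | sr k =>
          exfalso
          have h1 : (r 1 : DihedralGroup n) ∈ N := hle (Subgroup.mem_zpowers _)
          have h := hN _ h1 _ hx
          rw [r_mul_sr, sr_mul_r] at h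
          simp only [sr.injEq] at h
          exact two_ne_zero' hn (by linear_combination -h)
    · refine ⟨fun x hx y hy => zpowers_comm _ hx hy, fun N hN hle => ?_⟩
      refine le_antisymm hle ?_
      intro x hx
      have hi : (sr i : DihedralGroup n) ∈ N := hle (Subgroup.mem_zpowers _)
      rw [mem_zpowers_sr]
      cases x with
      | r j =>
          have := comm_r_sr hodd (hN _ hx _ hi)
          left; rw [this, one_def]
      | sr k =>
          right
          rw [comm_sr_sr hodd (hN _ hx _ hi)]

end Classification

section GenHom
variable {G H H' : Type*} [Group G] [Group H] [Group H']

lemma pow_congr (g : G) (t : H) (ht : t ^ orderOf g = 1) {a b : ℤ}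
    (h : g ^ a = g ^ b) : t ^ a = t ^ b := by
  have h1 : g ^ (a - b) = 1 := by rw [zpow_sub, h, mul_inv_cancel]
  obtain ⟨c, hc⟩ := orderOf_dvd_iff_zpow_eq_one.mpr h1
  have h2 : t ^ (a - b) = 1 := by
    rw [hc, zpow_mul, zpow_natCast, ht, one_zpow]
  have h3 : t ^ a * (t ^ b)⁻¹ = 1 := by rw [← zpow_sub]; exact h2
  exact mul_inv_eq_one.mp h3

/-- The hom from `zpowers g` sending `g` to `t`, when `t ^ orderOf g = 1`. -/
noncomputable def genHom (g : G) (t : H) (ht : t ^ orderOf g = 1) :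
    ↥(Subgroup.zpowers g) →* H where
  toFun x := t ^ (Classical.choose (Subgroup.mem_zpowers_iff.mp x.2))
  map_one' := by
    have h := Classical.choose_spec (Subgroup.mem_zpowers_iff.mp
      (1 : Subgroup.zpowers g).2)
    have : g ^ (Classical.choose (Subgroup.mem_zpowers_iff.mp
        (1 : Subgroup.zpowers g).2)) = g ^ (0 : ℤ) := by
      rw [h]; simp
    simpa using pow_congr g t ht this
  map_mul' x y := by
    have hx := Classical.choose_spec (Subgroup.mem_zpowers_iff.mp x.2)
    have hy := Classical.choose_spec (Subgroup.mem_zpowers_iff.mp y.2)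
    have hxy := Classical.choose_spec (Subgroup.mem_zpowers_iff.mp (x * y).2)
    have : g ^ (Classical.choose (Subgroup.mem_zpowers_iff.mp (x * y).2)) =
        g ^ (Classical.choose (Subgroup.mem_zpowers_iff.mp x.2) +
             Classical.choose (Subgroup.mem_zpowers_iff.mp y.2)) := by
      rw [hxy, zpow_add, hx, hy]; rfl
    simpa [zpow_add] using pow_congr g t ht this

lemma genHom_apply (g : G) (t : H) (ht : t ^ orderOf g = 1) (k : ℤ)
    (hk : g ^ k ∈ Subgroup.zpowers g) :
    genHom g t ht ⟨g ^ k, hk⟩ = t ^ k := by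
  refine pow_congr g t ht ?_
  exact Classical.choose_spec (Subgroup.mem_zpowers_iff.mp (⟨g ^ k, hk⟩ :
    Subgroup.zpowers g).2)

lemma genHom_gen (g : G) (t : H) (ht : t ^ orderOf g = 1) :
    genHom g t ht ⟨g, Subgroup.mem_zpowers g⟩ = t := by
  have : (⟨g, Subgroup.mem_zpowers g⟩ : Subgroup.zpowers g) =
      ⟨g ^ (1 : ℤ), by simp [Subgroup.mem_zpowers_iff]⟩ := by
    ext; simp
  rw [this, genHom_apply]; simp

lemma comp_genHom (φ : H →* H') (g : G) (t : H) (ht : t ^ orderOf g = 1)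
    (x : ↥(Subgroup.zpowers g)) :
    φ (genHom g t ht x) = genHom g (φ t)
      (by rw [← map_pow, ht, map_one]) x := by
  obtain ⟨y, hy⟩ := x
  obtain ⟨k, rfl⟩ := Subgroup.mem_zpowers_iff.mp hy
  rw [genHom_apply, genHom_apply, map_zpow]

lemma genHom_self (g : G) (ht : g ^ orderOf g = 1) (x : ↥(Subgroup.zpowers g)) :
    genHom g g ht x = x := by
  obtain ⟨y, hy⟩ := x
  obtain ⟨k, rfl⟩ := Subgroup.mem_zpowers_iff.mp hy
  rw [genHom_apply]

end GenHom

variable (n : ℕ)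

/-- letter index type -/
abbrev S (n : ℕ) : Type := {j : ZMod n // j ≠ 0} ⊕ (ZMod n × {j : ZMod n // j ≠ 0})

abbrev F (n : ℕ) := FreeGroup (S n)

noncomputable def la (j : ZMod n) : F n :=
  if h : j = 0 then 1 else FreeGroup.of (Sum.inl ⟨j, h⟩)

noncomputable def lb (i j : ZMod n) : F n :=
  if h : j = 0 then 1 else FreeGroup.of (Sum.inr (i, ⟨j, h⟩))

@[simp] lemma la_zero : la n 0 = 1 := dif_pos rfl
@[simp] lemma lb_zero (i : ZMod n) : lb n i 0 = 1 := dif_pos rfl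
lemma la_ne (j : ZMod n) (h : j ≠ 0) : la n j = FreeGroup.of (Sum.inl ⟨j, h⟩) := dif_neg h
lemma lb_ne (i j : ZMod n) (h : j ≠ 0) : lb n i j = FreeGroup.of (Sum.inr (i, ⟨j, h⟩)) := dif_neg h

/-- prefix products of the `A`-letters -/
noncomputable def QQ (j : ZMod n) : F n :=
  ((List.range j.val).map (fun t => la n ((t + 1 : ℕ) : ZMod n))).prod

noncomputable def fnone : DihedralGroup n → F n
  | DihedralGroup.r _ => 1
  | DihedralGroup.sr j => (QQ n (j - 1))⁻¹ * QQ n j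

noncomputable def fsome (i : ZMod n) : DihedralGroup n → F n
  | DihedralGroup.r j => lb n i j
  | DihedralGroup.sr k => (lb n i (k - i))⁻¹

@[simp] lemma fnone_r (j : ZMod n) : fnone n (r j) = 1 := rfl
@[simp] lemma fnone_sr (j : ZMod n) : fnone n (sr j) = (QQ n (j - 1))⁻¹ * QQ n j := rfl
@[simp] lemma fsome_r (i j : ZMod n) : fsome n i (r j) = lb n i j := rfl
@[simp] lemma fsome_sr (i k : ZMod n) : fsome n i (sr k) = (lb n i (k - i))⁻¹ := rfl

variable [NeZero n]

lemma QQ_succ (j : ZMod n) (h : j ≠ 0) : QQ n j = QQ n (j - 1) * la n j := by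
  have hv : 1 ≤ j.val := by
    rcases Nat.eq_zero_or_pos j.val with h0 | h1
    · exact absurd ((ZMod.val_eq_zero j).mp h0) h
    · exact h1
  have hsub : (j - 1).val = j.val - 1 := by
    have : j - 1 = ((j.val - 1 : ℕ) : ZMod n) := by
      have := ZMod.natCast_zmod_val j
      push_cast [Nat.cast_sub hv]
      rw [this]
    have hlt : j.val - 1 < n := by
      have := ZMod.val_lt j
      omega
    rw [this, ZMod.val_cast_of_lt hlt]
  have hrange : j.val = (j.val - 1) + 1 := by omega
  conv_lhs => rw [QQ, hrange, List.range_succ, List.map_append, List.prod_append]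
  simp only [List.map_cons, List.map_nil, List.prod_cons, List.prod_nil, mul_one]
  congr 1
  · rw [QQ, hsub]
  · congr 1
    have : ((j.val - 1 + 1 : ℕ) : ZMod n) = j := by
      rw [← hrange]; exact ZMod.natCast_zmod_val j
    rw [this]

/-- the `A`-telescoping -/
lemma fnone_sr_prod (j : ZMod n) (m : ℕ) :
    ((List.range m).map (fun t => fnone n (sr (j + (t : ℕ))))).prod
      = (QQ n (j - 1))⁻¹ * QQ n (j + (m : ℕ) - 1) := by
  induction m with
  | zero => simp
  | succ m ih =>
      rw [List.range_succ, List.map_append, List.prod_append, ih]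
      simp only [List.map_cons, List.map_nil, List.prod_cons, List.prod_nil, mul_one,
        fnone_sr]
      have h1 : j + ((m+1 : ℕ) : ZMod n) - 1 = j + ((m : ℕ) : ZMod n) := by push_cast; ring
      rw [h1, mul_assoc]
      congr 1
      rw [← mul_assoc, mul_inv_cancel, one_mul]

/-- translation action of `D` on `D → F` -/
noncomputable def act : DihedralGroup n →* MulAut (DihedralGroup n → F n) where
  toFun d :=
    { toFun := fun f x => f (d⁻¹ * x)
      invFun := fun f x => f (d * x)
      left_inv := fun f => funext fun x => by simp
      right_inv := fun f => funext fun x => by simp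
      map_mul' := fun f g => rfl }
  map_one' := by
    ext f x
    show f (1⁻¹ * x) = f x
    rw [inv_one, one_mul]
  map_mul' d e := by
    ext f x
    show f ((d * e)⁻¹ * x) = f (e⁻¹ * (d⁻¹ * x))
    rw [mul_inv_rev, mul_assoc]

@[simp] lemma act_apply (d : DihedralGroup n) (f : DihedralGroup n → F n)
    (x : DihedralGroup n) : act n d f x = f (d⁻¹ * x) := rfl

abbrev W (n : ℕ) [NeZero n] := (DihedralGroup n → F n) ⋊[act n] DihedralGroup n

noncomputable def wnone : W n := ⟨fnone n, r 1⟩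
noncomputable def wsome (i : ZMod n) : W n := ⟨fsome n i, sr i⟩

lemma sd_pow (f : DihedralGroup n → F n) (d : DihedralGroup n) (m : ℕ) :
    (⟨f, d⟩ : W n) ^ m =
      ⟨fun x => ((List.range m).map (fun t => f ((d ^ t)⁻¹ * x))).prod, d ^ m⟩ := by
  induction m with
  | zero =>
      refine SemidirectProduct.ext ?_ ?_
      · show (1 : W n).left = _
        rw [SemidirectProduct.one_left]
        funext x
        simp
      · simp [SemidirectProduct.one_right]
  | succ m ih =>
      rw [pow_succ, ih, SemidirectProduct.mul_def]
      refine SemidirectProduct.ext ?_ rfl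
      show _ * (act n (d ^ m)) f = _
      funext x
      simp [List.range_succ, -map_pow]

lemma wnone_pow : wnone n ^ orderOf (r 1 : DihedralGroup n) = 1 := by
  rw [orderOf_r_one, wnone, sd_pow]
  have hr : ∀ t : ℕ, ((r 1 : DihedralGroup n) ^ t)⁻¹ = r (-(t : ZMod n)) := by
    intro t; rw [r_one_pow]; rfl
  refine SemidirectProduct.ext ?_ ?_
  · show _ = (1 : W n).left
    rw [SemidirectProduct.one_left]
    funext x
    show ((List.range n).map _).prod = (1 : (DihedralGroup n → F n)) x
    cases x with
    | r j =>
        rw [Pi.one_apply]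
        apply List.prod_eq_one
        intro y hy
        simp only [List.mem_map] at hy
        obtain ⟨t, _, rfl⟩ := hy
        rw [hr, r_mul_r, fnone_r]
    | sr j =>
        rw [Pi.one_apply]
        have : ∀ t : ℕ, t ∈ List.range n →
            fnone n (((r 1 : DihedralGroup n) ^ t)⁻¹ * sr j) = fnone n (sr (j + (t:ℕ))) := by
          intro t _
          rw [hr, r_mul_sr]
          congr 1
          ring
        rw [List.map_congr_left this, fnone_sr_prod]
        rw [ZMod.natCast_self]
        simp
  · show _ = (1 : W n).right
    rw [SemidirectProduct.one_right, r_one_pow, ZMod.natCast_self, ← one_def]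

lemma wsome_pow (i : ZMod n) : wsome n i ^ orderOf (sr i : DihedralGroup n) = 1 := by
  rw [orderOf_sr, pow_two, wsome, SemidirectProduct.mul_def]
  have hinv : (sr i : DihedralGroup n)⁻¹ = sr i := rfl
  refine SemidirectProduct.ext ?_ ?_
  · show _ = (1 : W n).left
    rw [SemidirectProduct.one_left]
    funext x
    show fsome n i x * (act n (sr i)) (fsome n i) x = (1 : (DihedralGroup n → F n)) x
    rw [act_apply, hinv, Pi.one_apply]
    cases x with
    | r j =>
        rw [sr_mul_r, fsome_r, fsome_sr]
        simp
    | sr k =>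
        rw [sr_mul_sr, fsome_sr, fsome_r]
        simp
  · show _ = (1 : W n).right
    rw [SemidirectProduct.one_right, sr_mul_self]

abbrev P (n : ℕ) := Monoid.CoprodI (fun o : Option (ZMod n) => ↥(dihedralMaxAbelianFamily n o))

noncomputable def pi : P n →* DihedralGroup n :=
  Monoid.CoprodI.lift (fun o => (dihedralMaxAbelianFamily n o).subtype)

noncomputable def Phi : P n →* W n :=
  Monoid.CoprodI.lift (fun o =>
    match o with
    | none => genHom (r 1) (wnone n) (wnone_pow n)
    | some i => genHom (sr i) (wsome n i) (wsome_pow n i))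

def rgen : ↥(dihedralMaxAbelianFamily n none) := ⟨r 1, Subgroup.mem_zpowers _⟩
def sgen (i : ZMod n) : ↥(dihedralMaxAbelianFamily n (some i)) := ⟨sr i, Subgroup.mem_zpowers _⟩

noncomputable def ofF (o : Option (ZMod n)) : ↥(dihedralMaxAbelianFamily n o) →* P n :=
  @Monoid.CoprodI.of (Option (ZMod n)) (fun o => ↥(dihedralMaxAbelianFamily n o)) _ o

noncomputable def rho : P n := Monoid.CoprodI.of (rgen n)
noncomputable def tauu (i : ZMod n) : P n := Monoid.CoprodI.of (sgen n i)

lemma Phi_rho : Phi n (rho n) = wnone n := by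
  rw [Phi, rho, Monoid.CoprodI.lift_of]
  exact genHom_gen _ _ _

lemma Phi_tau (i : ZMod n) : Phi n (tauu n i) = wsome n i := by
  rw [Phi, tauu, Monoid.CoprodI.lift_of]
  exact genHom_gen _ _ _

lemma pi_rho : pi n (rho n) = r 1 := by
  rw [pi, rho, Monoid.CoprodI.lift_of]; rfl

lemma pi_tau (i : ZMod n) : pi n (tauu n i) = sr i := by
  rw [pi, tauu, Monoid.CoprodI.lift_of]; rfl

lemma Phi_right (x : P n) : (Phi n x).right = pi n x := by
  induction x using Monoid.CoprodI.induction_on with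
  | one => simp
  | of o m =>
      rw [Phi, pi, Monoid.CoprodI.lift_of, Monoid.CoprodI.lift_of]
      cases o with
      | none =>
          have h := comp_genHom (SemidirectProduct.rightHom) (r 1 : DihedralGroup n)
            (wnone n) (wnone_pow n) m
          show SemidirectProduct.rightHom ((genHom (r 1) (wnone n) (wnone_pow n)) m) = _
          rw [h]
          have : SemidirectProduct.rightHom (wnone n) = (r 1 : DihedralGroup n) := rfl
          simp only [this]
          exact genHom_self _ _ m
      | some i =>
          have h := comp_genHom (SemidirectProduct.rightHom) (sr i : DihedralGroup n)
            (wsome n i) (wsome_pow n i) m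
          show SemidirectProduct.rightHom ((genHom (sr i) (wsome n i) (wsome_pow n i)) m) = _
          rw [h]
          have : SemidirectProduct.rightHom (wsome n i) = (sr i : DihedralGroup n) := rfl
          simp only [this]
          exact genHom_self _ _ m
  | mul x y hx hy =>
      rw [map_mul, map_mul, SemidirectProduct.mul_right, hx, hy]

noncomputable def psi : ↥(MonoidHom.ker (pi n)) →* F n where
  toFun k := (Phi n ↑k).left 1
  map_one' := by
    simp [SemidirectProduct.one_left]
  map_mul' k k' := by
    have hk : (Phi n (↑k : P n)).right = 1 := by
      rw [Phi_right]; exact MonoidHom.mem_ker.mp k.2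
    show (Phi n ↑(k * k')).left 1 = _
    have hcoe : (↑(k * k') : P n) = ↑k * ↑k' := rfl
    rw [hcoe, map_mul, SemidirectProduct.mul_left, Pi.mul_apply, hk, map_one]
    simp

@[simp] lemma wnone_left : (wnone n).left = fnone n := rfl
@[simp] lemma wnone_right : (wnone n).right = r 1 := rfl
@[simp] lemma wsome_left (i : ZMod n) : (wsome n i).left = fsome n i := rfl
@[simp] lemma wsome_right (i : ZMod n) : (wsome n i).right = sr i := rfl
@[simp] lemma sr_inv (i : ZMod n) : (sr i : DihedralGroup n)⁻¹ = sr i := rfl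
@[simp] lemma r_inv (i : ZMod n) : (r i : DihedralGroup n)⁻¹ = r (-i) := rfl

lemma tau_mul_self (i : ZMod n) : tauu n i * tauu n i = 1 := by
  rw [tauu, ← map_mul]
  have : sgen n i * sgen n i = 1 := by
    apply Subtype.ext
    show (sr i : DihedralGroup n) * sr i = 1
    exact sr_mul_self i
  rw [this, map_one]

lemma tau_inv (i : ZMod n) : (tauu n i)⁻¹ = tauu n i :=
  inv_eq_of_mul_eq_one_right (tau_mul_self n i)

lemma rho_pow_n : rho n ^ n = 1 := by
  rw [rho, ← map_pow]
  have : rgen n ^ n = 1 := by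
    apply Subtype.ext
    show ((rgen n : DihedralGroup n)) ^ n = 1
    exact r_one_pow_n
  rw [this, map_one]

lemma fnone_sr_ne (j : ZMod n) (h : j ≠ 0) :
    (QQ n (j - 1))⁻¹ * QQ n j = la n j := by
  rw [QQ_succ n j h, inv_mul_cancel_left]

noncomputable def iota0 : F n →* P n :=
  FreeGroup.lift (fun s =>
    match s with
    | Sum.inl ⟨j, _⟩ => (tauu n j)⁻¹ * rho n * tauu n (j + 1)
    | Sum.inr (i, ⟨j, _⟩) => (rho n ^ j.val)⁻¹ * tauu n i * tauu n (i + j))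

lemma iota0_inl (j : ZMod n) (h : j ≠ 0) :
    iota0 n (FreeGroup.of (Sum.inl ⟨j, h⟩)) = (tauu n j)⁻¹ * rho n * tauu n (j + 1) := by
  rw [iota0, FreeGroup.lift_apply_of]

lemma iota0_inr (i j : ZMod n) (h : j ≠ 0) :
    iota0 n (FreeGroup.of (Sum.inr (i, ⟨j, h⟩))) =
      (rho n ^ j.val)⁻¹ * tauu n i * tauu n (i + j) := by
  rw [iota0, FreeGroup.lift_apply_of]

lemma pi_rho_pow (m : ℕ) : pi n (rho n ^ m) = r ((m : ℕ) : ZMod n) := by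
  rw [map_pow, pi_rho, r_one_pow]

lemma pi_iota0_of (s : S n) : pi n (iota0 n (FreeGroup.of s)) = 1 := by
  rcases s with ⟨j, hj⟩ | ⟨i, j, hj⟩
  · rw [iota0_inl n j hj]
    simp only [map_mul, map_inv, pi_tau, pi_rho, sr_inv]
    rw [sr_mul_r, sr_mul_sr, sub_self, ← one_def]
  · rw [iota0_inr n i j hj]
    simp only [map_mul, map_inv, pi_tau, pi_rho_pow]
    rw [ZMod.natCast_zmod_val, r_inv, r_mul_sr, sr_mul_sr]
    rw [show i + j - (i - -j) = 0 by ring, ← one_def]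

lemma iota0_mem (x : F n) : iota0 n x ∈ MonoidHom.ker (pi n) := by
  induction x using FreeGroup.induction_on with
  | C1 => simp
  | of s => exact MonoidHom.mem_ker.mpr (pi_iota0_of n s)
  | inv_of s hs => rw [map_inv]; exact inv_mem hs
  | mul x y hx hy => rw [map_mul]; exact mul_mem hx hy

noncomputable def iota : F n →* ↥(MonoidHom.ker (pi n)) :=
  (iota0 n).codRestrict _ (iota0_mem n)

lemma psi_iota_inl (j : ZMod n) (hj : j ≠ 0) :
    (Phi n ((tauu n j)⁻¹ * rho n * tauu n (j + 1))).left 1 = la n j := by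
  rw [map_mul, map_mul, map_inv, Phi_tau, Phi_rho, Phi_tau]
  simp only [SemidirectProduct.mul_left, SemidirectProduct.mul_right,
    SemidirectProduct.inv_left, SemidirectProduct.inv_right,
    wnone_left, wnone_right, wsome_left, wsome_right,
    Pi.mul_apply, Pi.inv_apply, act_apply, sr_inv, inv_inv, mul_one,
    fnone_sr, fsome_sr, fsome_r, sr_mul_r, sr_mul_sr]
  rw [sub_self, sub_self, lb_zero, lb_zero, inv_one, one_mul, mul_one]
  exact fnone_sr_ne n j hj

lemma Phi_rho_pow (m : ℕ) : Phi n (rho n ^ m) =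
    ⟨fun x => ((List.range m).map
        (fun t => fnone n (((r 1 : DihedralGroup n) ^ t)⁻¹ * x))).prod,
      (r 1 : DihedralGroup n) ^ m⟩ := by
  rw [map_pow, Phi_rho, wnone, sd_pow]

lemma psi_iota_inr (i j : ZMod n) (hj : j ≠ 0) :
    (Phi n ((rho n ^ j.val)⁻¹ * tauu n i * tauu n (i + j))).left 1 = lb n i j := by
  rw [map_mul, map_mul, map_inv, Phi_rho_pow, Phi_tau, Phi_tau]
  simp only [SemidirectProduct.mul_left, SemidirectProduct.mul_right,
    SemidirectProduct.inv_left, SemidirectProduct.inv_right,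
    wsome_left, wsome_right,
    Pi.mul_apply, Pi.inv_apply, act_apply, sr_inv, inv_inv, mul_one, r_one_pow,
    r_inv, r_mul_r, r_mul_sr, sr_mul_r, sr_mul_sr,
    fnone_r, fnone_sr, fsome_sr, fsome_r]
  rw [List.map_const', List.prod_replicate, one_pow, inv_one, one_mul, neg_neg,
    ZMod.natCast_zmod_val]
  rw [show i - -j - (i + j) = 0 by ring, lb_zero, inv_one, mul_one]

noncomputable def sigmaT : DihedralGroup n → P n
  | DihedralGroup.r j => rho n ^ j.val
  | DihedralGroup.sr j => tauu n j

@[simp] lemma sigma_r (j : ZMod n) : sigmaT n (r j) = rho n ^ j.val := rfl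
@[simp] lemma sigma_sr (j : ZMod n) : sigmaT n (sr j) = tauu n j := rfl

lemma cast_ne_zero {k : ℕ} (h1 : 0 < k) (h2 : k < n) : ((k : ℕ) : ZMod n) ≠ 0 := by
  intro h
  have := ZMod.val_cast_of_lt h2
  rw [h, ZMod.val_zero] at this
  omega

lemma iotaQ (m : ℕ) (hm : m < n) :
    iota0 n (((List.range m).map (fun t => la n ((t + 1 : ℕ) : ZMod n))).prod)
      = (tauu n 1)⁻¹ * rho n ^ m * tauu n ((1 + m : ℕ) : ZMod n) := by
  induction m with
  | zero =>
      simp only [List.range_zero, List.map_nil, List.prod_nil, map_one, pow_zero, mul_one,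
        Nat.add_zero, Nat.cast_one]
      rw [inv_mul_cancel]
  | succ m ih =>
      have hm' : m < n := by omega
      have hne : ((m + 1 : ℕ) : ZMod n) ≠ 0 := cast_ne_zero n (by omega) hm
      rw [List.range_succ, List.map_append, List.prod_append, map_mul, ih hm']
      simp only [List.map_cons, List.map_nil, List.prod_cons, List.prod_nil, mul_one]
      rw [la_ne n _ hne, iota0_inl]
      have h1 : ((1 + m : ℕ) : ZMod n) = ((m + 1 : ℕ) : ZMod n) := by push_cast; ring
      rw [h1]
      have h2 : tauu n ((m + 1 : ℕ) : ZMod n) * ((tauu n ((m + 1 : ℕ) : ZMod n))⁻¹ *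
          rho n * tauu n (((m + 1 : ℕ) : ZMod n) + 1)) =
          rho n * tauu n (((m + 1 : ℕ) : ZMod n) + 1) := by
        group
      rw [mul_assoc ((tauu n 1)⁻¹ * rho n ^ m), h2, ← mul_assoc, mul_assoc (tauu n 1)⁻¹,
        ← pow_succ]
      congr 2
      push_cast
      ring

lemma step_none (d : DihedralGroup n) :
    (sigmaT n (r 1 * d))⁻¹ * rho n * sigmaT n d ∈ (iota0 n).range := by
  have hpos : 0 < n := NeZero.pos n
  cases d with
  | r j =>
      rw [r_mul_r, sigma_r, sigma_r]
      by_cases hc : 1 + j = 0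
      · rw [hc, ZMod.val_zero, pow_zero, inv_one, one_mul]
        have hj : j.val = n - 1 := by
          have hj1 : j = -1 := by linear_combination hc
          subst hj1
          obtain ⟨m, rfl⟩ : ∃ m, n = m + 1 := ⟨n - 1, by omega⟩
          rw [ZMod.val_neg_one]
          omega
        rw [hj, ← pow_succ']
        rw [show n - 1 + 1 = n by omega, rho_pow_n]
        exact one_mem _
      · have hval : j.val ≠ n - 1 := by
          intro h
          apply hc
          have hj : j = ((n - 1 : ℕ) : ZMod n) := by
            conv_lhs => rw [← ZMod.natCast_zmod_val j, h]
          rw [hj]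
          have : ((n - 1 : ℕ) : ZMod n) = ((n : ℕ) : ZMod n) - 1 := by
            rw [Nat.cast_sub (by omega)]
            norm_num
          rw [this, ZMod.natCast_self]
          ring
        have hv : (1 + j).val = j.val + 1 := by
          have hjn : j.val < n := ZMod.val_lt j
          have h1j : 1 + j = ((j.val + 1 : ℕ) : ZMod n) := by
            push_cast [ZMod.natCast_zmod_val j]
            ring
          rw [h1j, ZMod.val_cast_of_lt (by omega)]
        rw [hv, pow_succ', mul_inv_rev, inv_mul_cancel_right, inv_mul_cancel]
        exact one_mem _
  | sr j =>
      rw [r_mul_sr, sigma_sr, sigma_sr]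
      by_cases h : j - 1 = 0
      · have hj : j = 1 := by linear_combination h
        subst hj
        have hiq := iotaQ n (n - 1) (by omega)
        have hn1 : ((1 + (n - 1) : ℕ) : ZMod n) = 0 := by
          rw [show (1 + (n - 1) : ℕ) = n by omega, ZMod.natCast_self]
        rw [hn1] at hiq
        rw [h]
        refine ⟨(((List.range (n - 1)).map (fun t => la n ((t + 1 : ℕ) : ZMod n))).prod)⁻¹, ?_⟩
        rw [map_inv, hiq, mul_inv_rev, mul_inv_rev, inv_inv, tau_inv]
        have hrr : (rho n ^ (n - 1))⁻¹ = rho n := by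
          apply inv_eq_of_mul_eq_one_left
          rw [← pow_succ', show n - 1 + 1 = n by omega, rho_pow_n]
        rw [hrr, ← mul_assoc]
      · refine ⟨FreeGroup.of (Sum.inl ⟨j - 1, h⟩), ?_⟩
        rw [iota0_inl]
        congr 2
        ring

lemma step_some (i : ZMod n) (d : DihedralGroup n) :
    (sigmaT n (sr i * d))⁻¹ * tauu n i * sigmaT n d ∈ (iota0 n).range := by
  cases d with
  | r j =>
      rw [sr_mul_r, sigma_sr, sigma_r]
      by_cases hj : j = 0
      · subst hj
        rw [ZMod.val_zero, pow_zero, mul_one, add_zero, tau_inv, tau_mul_self]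
        exact one_mem _
      · have hmem : (rho n ^ j.val)⁻¹ * tauu n i * tauu n (i + j) ∈ (iota0 n).range :=
          ⟨FreeGroup.of (Sum.inr (i, ⟨j, hj⟩)), iota0_inr n i j hj⟩
        have heq : (tauu n (i + j))⁻¹ * tauu n i * rho n ^ j.val =
            ((rho n ^ j.val)⁻¹ * tauu n i * tauu n (i + j))⁻¹ := by
          rw [mul_inv_rev, mul_inv_rev, inv_inv, tau_inv n i, mul_assoc]
        rw [heq]
        exact inv_mem hmem
  | sr k =>
      rw [sr_mul_sr, sigma_r, sigma_sr]
      by_cases h : k - i = 0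
      · have : k = i := by linear_combination h
        subst this
        rw [h, ZMod.val_zero, pow_zero, inv_one, one_mul, tau_mul_self]
        exact one_mem _
      · refine ⟨FreeGroup.of (Sum.inr (i, ⟨k - i, h⟩)), ?_⟩
        rw [iota0_inr]
        congr 2
        ring

lemma key_pow (g : DihedralGroup n) (Gp : P n)
    (hstep : ∀ d, (sigmaT n (g * d))⁻¹ * Gp * sigmaT n d ∈ (iota0 n).range) :
    ∀ (m : ℕ) (d : DihedralGroup n),
      (sigmaT n (g ^ m * d))⁻¹ * Gp ^ m * sigmaT n d ∈ (iota0 n).range := by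
  intro m
  induction m with
  | zero =>
      intro d
      rw [pow_zero, pow_zero, one_mul, mul_one]
      rw [inv_mul_cancel]
      exact one_mem _
  | succ m ih =>
      intro d
      have h1 := hstep (g ^ m * d)
      have h2 := ih d
      have heq : (sigmaT n (g ^ (m + 1) * d))⁻¹ * Gp ^ (m + 1) * sigmaT n d =
          ((sigmaT n (g * (g ^ m * d)))⁻¹ * Gp * sigmaT n (g ^ m * d)) *
            ((sigmaT n (g ^ m * d))⁻¹ * Gp ^ m * sigmaT n d) := by
        rw [show g ^ (m + 1) * d = g * (g ^ m * d) by rw [pow_succ', mul_assoc]]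
        rw [pow_succ']
        group
      rw [heq]
      exact mul_mem h1 h2

lemma key_zpow (g : DihedralGroup n) (Gp : P n)
    (hstep : ∀ d, (sigmaT n (g * d))⁻¹ * Gp * sigmaT n d ∈ (iota0 n).range) :
    ∀ (k : ℤ) (d : DihedralGroup n),
      (sigmaT n (g ^ k * d))⁻¹ * Gp ^ k * sigmaT n d ∈ (iota0 n).range := by
  intro k d
  cases k with
  | ofNat m =>
      rw [Int.ofNat_eq_coe, zpow_natCast, zpow_natCast]
      exact key_pow n g Gp hstep m d
  | negSucc m =>
      rw [Int.negSucc_eq]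
      have hd : g ^ ((m + 1 : ℕ) : ℤ) * (g ^ (-((m : ℤ) + 1)) * d) = d := by
        rw [← mul_assoc, ← zpow_add]
        push_cast
        rw [show (m : ℤ) + 1 + -((m : ℤ) + 1) = 0 by ring, zpow_zero, one_mul]
      have h1 := key_pow n g Gp hstep (m + 1) (g ^ (-((m : ℤ) + 1)) * d)
      rw [show g ^ (m + 1) * (g ^ (-((m : ℤ) + 1)) * d) = d by
        rw [← zpow_natCast g (m + 1)]; exact_mod_cast hd] at h1
      have h2 := inv_mem h1
      have heq : ((sigmaT n d)⁻¹ * Gp ^ (m + 1) * sigmaT n (g ^ (-((m : ℤ) + 1)) * d))⁻¹ =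
          (sigmaT n (g ^ (-((m : ℤ) + 1)) * d))⁻¹ * Gp ^ (-((m : ℤ) + 1)) * sigmaT n d := by
        rw [show Gp ^ (-((m : ℤ) + 1)) = (Gp ^ (m + 1))⁻¹ by
          rw [← zpow_natCast Gp (m + 1)]; push_cast; rw [zpow_neg]]
        group
      rw [heq] at h2
      exact h2

lemma key (p : P n) : ∀ d : DihedralGroup n,
    (sigmaT n (pi n p * d))⁻¹ * p * sigmaT n d ∈ (iota0 n).range := by
  induction p using Monoid.CoprodI.induction_on with
  | one =>
      intro d
      rw [map_one, one_mul, mul_one, inv_mul_cancel]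
      exact one_mem _
  | mul x y hx hy =>
      intro d
      have h1 := hx (pi n y * d)
      have h2 := hy d
      have e : pi n (x * y) * d = pi n x * (pi n y * d) := by rw [map_mul, mul_assoc]
      rw [e]
      have heq : (sigmaT n (pi n x * (pi n y * d)))⁻¹ * (x * y) * sigmaT n d =
          ((sigmaT n (pi n x * (pi n y * d)))⁻¹ * x * sigmaT n (pi n y * d)) *
            ((sigmaT n (pi n y * d))⁻¹ * y * sigmaT n d) := by group
      rw [heq]
      exact mul_mem h1 h2
  | of o m =>
      intro d
      cases o with
      | none =>
          have hm2 : (↑m : DihedralGroup n) ∈ Subgroup.zpowers (r 1 : DihedralGroup n) := m.2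
          obtain ⟨k, hk⟩ := Subgroup.mem_zpowers_iff.mp hm2
          have hzp : ofF n none (rgen n ^ k) = rho n ^ k := by
            rw [show rho n = ofF n none (rgen n) from rfl]
            exact map_zpow (ofF n none) (rgen n) k
          have hm : ofF n none m = rho n ^ k := by
            rw [← hzp]
            congr 1
            apply Subtype.ext
            rw [SubgroupClass.coe_zpow, ← hk]
            rfl
          have hgoal : @Monoid.CoprodI.of (Option (ZMod n))
              (fun o => ↥(dihedralMaxAbelianFamily n o)) _ none m = rho n ^ k := hm
          rw [hgoal, map_zpow, pi_rho]
          exact key_zpow n (r 1) (rho n) (step_none n) k d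
      | some i =>
          have hm2 : (↑m : DihedralGroup n) ∈ Subgroup.zpowers (sr i : DihedralGroup n) := m.2
          obtain ⟨k, hk⟩ := Subgroup.mem_zpowers_iff.mp hm2
          have hzp : ofF n (some i) (sgen n i ^ k) = tauu n i ^ k := by
            rw [show tauu n i = ofF n (some i) (sgen n i) from rfl]
            exact map_zpow (ofF n (some i)) (sgen n i) k
          have hm : ofF n (some i) m = tauu n i ^ k := by
            rw [← hzp]
            congr 1
            apply Subtype.ext
            rw [SubgroupClass.coe_zpow, ← hk]
            rfl
          have hgoal : @Monoid.CoprodI.of (Option (ZMod n))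
              (fun o => ↥(dihedralMaxAbelianFamily n o)) _ (some i) m = tauu n i ^ k := hm
          rw [hgoal, map_zpow, pi_tau]
          exact key_zpow n (sr i) (tauu n i) (step_some n i) k d

lemma iota_surjective : Function.Surjective (iota n) := by
  rintro ⟨k, hk⟩
  have hk1 : pi n k = 1 := MonoidHom.mem_ker.mp hk
  have h := key n k (r 0)
  rw [hk1, one_mul, sigma_r, ZMod.val_zero, pow_zero, mul_one] at h
  rw [inv_one, one_mul] at h
  obtain ⟨x, hx⟩ := h
  exact ⟨x, Subtype.ext hx⟩

lemma psi_iota (x : F n) : psi n (iota n x) = x := by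
  have h : (psi n).comp (iota n) = MonoidHom.id (F n) := by
    apply FreeGroup.ext_hom
    intro s
    show psi n (iota n (FreeGroup.of s)) = FreeGroup.of s
    have hcoe : (↑(iota n (FreeGroup.of s)) : P n) = iota0 n (FreeGroup.of s) := rfl
    show (Phi n ↑(iota n (FreeGroup.of s))).left 1 = FreeGroup.of s
    rw [hcoe]
    rcases s with ⟨j, hj⟩ | ⟨i, j, hj⟩
    · rw [iota0_inl n j hj, psi_iota_inl n j hj, la_ne n j hj]
    · rw [iota0_inr n i j hj, psi_iota_inr n i j hj, lb_ne n i j hj]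
  calc psi n (iota n x) = ((psi n).comp (iota n)) x := rfl
    _ = x := by rw [h]; rfl

lemma iota_injective : Function.Injective (iota n) := by
  intro x y hxy
  have := congrArg (psi n) hxy
  rwa [psi_iota, psi_iota] at this

noncomputable def kerEquiv : ↥(MonoidHom.ker (pi n)) ≃* F n :=
  (MulEquiv.ofBijective (iota n) ⟨iota_injective n, iota_surjective n⟩).symm

lemma card_S (hn : 3 ≤ n) : Fintype.card (S n) = n ^ 2 - 1 := by
  have h1 : Fintype.card {j : ZMod n // j ≠ 0} = n - 1 := by
    rw [Fintype.card_subtype_compl, Fintype.card_subtype_eq, ZMod.card]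
  rw [Fintype.card_sum, Fintype.card_prod, h1, ZMod.card]
  obtain ⟨m, rfl⟩ : ∃ m, n = m + 1 := ⟨n - 1, by omega⟩
  have e1 : m + 1 - 1 = m := by omega
  have e2 : (m + 1) ^ 2 - 1 = m * m + 2 * m := by
    have : (m + 1) ^ 2 = m * m + 2 * m + 1 := by ring
    omega
  rw [e1, e2]
  ring

end DKF

/-- For odd `n ≥ 3`, the dihedral group `D_{2n}` has trivial center, its
maximal abelian subgroups are exactly the rotation subgroup `⟨a⟩` and the `n`
reflection subgroups `⟨aⁱb⟩`, and the kernel of the canonical map from the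
free product of these `n + 1` subgroups to `D_{2n}` is a free group of rank
`n² − 1`. -/
theorem dihedral_kernel_of_free_product_is_free
    (n : ℕ) (hn : 3 ≤ n) (hodd : Odd n) :
    Subgroup.center (DihedralGroup n) = ⊥ ∧
    (∀ M : Subgroup (DihedralGroup n),
      ((∀ x ∈ M, ∀ y ∈ M, x * y = y * x) ∧
        ∀ N : Subgroup (DihedralGroup n),
          (∀ x ∈ N, ∀ y ∈ N, x * y = y * x) → M ≤ N → M = N) ↔
      (M = Subgroup.zpowers (DihedralGroup.r 1) ∨
        ∃ i : ZMod n, M = Subgroup.zpowers (DihedralGroup.sr i))) ∧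
    Nonempty
      ((MonoidHom.ker
        (Monoid.CoprodI.lift (fun o => (dihedralMaxAbelianFamily n o).subtype) :
          Monoid.CoprodI (fun o : Option (ZMod n) => ↥(dihedralMaxAbelianFamily n o)) →*
          DihedralGroup n)) ≃*
        FreeGroup (Fin (n ^ 2 - 1))) := by

  haveI : NeZero n := ⟨by omega⟩
  refine ⟨DKF.center_trivial hn hodd, fun M => DKF.classification hn hodd M, ?_⟩
  exact ⟨(DKF.kerEquiv n).trans
    (FreeGroup.freeGroupCongr (Fintype.equivFinOfCardEq (DKF.card_S n hn)))⟩
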